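/- For all integers s, t, r, the extended shuffle product on depth-one symbols is associative: ([s] ⧢ [t]) ⧢ [r] = [s] ⧢ ([t] ⧢ [r]). -/

import Mathlib

noncomputable section

/-- The vector space ℋ_ℤ with basis the symbols `[s₁,…,s_k]` (lists of integers),
the empty list being the unit `1`. -/
abbrev HZ : Type := List ℤ →₀ ℚ

/-- The basis symbol `[s₁,…,s_k]`. -/
def bs (l : List ℤ) : HZ := Finsupp.single l 1

/-- Linear extension of a map defined on basis symbols. -/
def hlift (f : List ℤ → HZ) : HZ →ₗ[ℚ] HZ := Finsupp.lift HZ ℚ (List ℤ) f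

/-- Prepending a `0` entry to every basis symbol. -/
def preZ : HZ →ₗ[ℚ] HZ := hlift fun l => bs (0 :: l)

/-- The operator `I` adding 1 to the first entry. -/
def Imap : HZ →ₗ[ℚ] HZ := hlift fun l =>
  match l with
  | [] => 0
  | s :: r => bs ((s + 1) :: r)

/-- The operator `J` subtracting 1 from the first entry, with `J(1) = 0`. -/
def Jmap : HZ →ₗ[ℚ] HZ := hlift fun l =>
  match l with
  | [] => 0
  | s :: r => bs ((s - 1) :: r)

/-- The five-case recursion defining the extended shuffle product on ℋ_ℤ. -/
def IsExtShuffle (m : HZ →ₗ[ℚ] HZ →ₗ[ℚ] HZ) : Prop :=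
  (∀ x, m (bs []) x = x) ∧
  (∀ x, m x (bs []) = x) ∧
  (∀ (s' : List ℤ) (t₁ : ℤ) (t' : List ℤ),
    m (bs (0 :: s')) (bs (t₁ :: t')) = preZ (m (bs s') (bs (t₁ :: t')))) ∧
  (∀ (s₁ : ℤ), 0 < s₁ → ∀ (s' t' : List ℤ),
    m (bs (s₁ :: s')) (bs (0 :: t')) = preZ (m (bs (s₁ :: s')) (bs t'))) ∧
  (∀ (s₁ t₁ : ℤ), 0 < s₁ → 0 < t₁ → ∀ (s' t' : List ℤ),
    m (bs (s₁ :: s')) (bs (t₁ :: t')) =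
      Imap (m (bs (s₁ :: s')) (bs ((t₁ - 1) :: t'))) +
      Imap (m (bs ((s₁ - 1) :: s')) (bs (t₁ :: t')))) ∧
  (∀ (s₁ t₁ : ℤ), 0 < s₁ → t₁ < 0 → ∀ (s' t' : List ℤ),
    m (bs (s₁ :: s')) (bs (t₁ :: t')) =
      Jmap (m (bs (s₁ :: s')) (bs ((t₁ + 1) :: t'))) -
      m (bs ((s₁ - 1) :: s')) (bs ((t₁ + 1) :: t'))) ∧
  (∀ (s₁ : ℤ), s₁ < 0 → ∀ (t₁ : ℤ) (s' t' : List ℤ),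
    m (bs (s₁ :: s')) (bs (t₁ :: t')) =
      Jmap (m (bs ((s₁ + 1) :: s')) (bs (t₁ :: t'))) -
      m (bs ((s₁ + 1) :: s')) (bs ((t₁ - 1) :: t')))

lemma hlift_bs (f : List ℤ → HZ) (l : List ℤ) : hlift f (bs l) = f l := by
  simp [hlift, bs]

lemma preZ_bs (l : List ℤ) : preZ (bs l) = bs (0 :: l) := hlift_bs _ _

lemma Imap_bs (a : ℤ) (l : List ℤ) : Imap (bs (a :: l)) = bs ((a + 1) :: l) := hlift_bs _ _

lemma Jmap_bs (a : ℤ) (l : List ℤ) : Jmap (bs (a :: l)) = bs ((a - 1) :: l) := hlift_bs _ _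

lemma Jmap_nil : Jmap (bs []) = 0 := hlift_bs _ _

lemma hlift_mem {N : Submodule ℚ HZ} {f : List ℤ → HZ} (hf : ∀ l, f l ∈ N) (x : HZ) :
    hlift f x ∈ N := by
  rw [hlift, Finsupp.lift_apply]
  exact Submodule.sum_mem _ fun l _ => Submodule.smul_mem _ _ (hf l)

/-- span of nonempty symbols -/
def Vne : Submodule ℚ HZ := Submodule.span ℚ {x | ∃ a l, x = bs (a :: l)}

def V0 : Submodule ℚ HZ := Submodule.span ℚ {x | ∃ a l, x = bs (a :: l) ∧ 0 ≤ a}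

def V1 : Submodule ℚ HZ := Submodule.span ℚ {x | ∃ a l, x = bs (a :: l) ∧ 0 < a}

lemma bs_mem_Vne (a : ℤ) (l : List ℤ) : bs (a :: l) ∈ Vne :=
  Submodule.subset_span ⟨a, l, rfl⟩

lemma bs_mem_V0 {a : ℤ} (ha : 0 ≤ a) (l : List ℤ) : bs (a :: l) ∈ V0 :=
  Submodule.subset_span ⟨a, l, rfl, ha⟩

lemma bs_mem_V1 {a : ℤ} (ha : 0 < a) (l : List ℤ) : bs (a :: l) ∈ V1 :=
  Submodule.subset_span ⟨a, l, rfl, ha⟩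

lemma V1_le_V0 : V1 ≤ V0 := by
  apply Submodule.span_le.2
  rintro x ⟨a, l, rfl, ha⟩
  exact bs_mem_V0 ha.le l

lemma preZ_mem_Vne (x : HZ) : preZ x ∈ Vne := hlift_mem (fun l => bs_mem_Vne 0 l) x

lemma preZ_mem_V0 (x : HZ) : preZ x ∈ V0 := hlift_mem (fun l => bs_mem_V0 le_rfl l) x

lemma Imap_mem_Vne (x : HZ) : Imap x ∈ Vne := by
  refine hlift_mem (fun l => ?_) x
  cases l with
  | nil => exact Vne.zero_mem
  | cons a r => exact bs_mem_Vne _ _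

lemma Jmap_mem_Vne (x : HZ) : Jmap x ∈ Vne := by
  refine hlift_mem (fun l => ?_) x
  cases l with
  | nil => exact Vne.zero_mem
  | cons a r => exact bs_mem_Vne _ _

lemma Imap_mem_V1 {x : HZ} (hx : x ∈ V0) : Imap x ∈ V1 := by
  induction hx using Submodule.span_induction with
  | mem x h => obtain ⟨a, l, rfl, ha⟩ := h; rw [Imap_bs]; exact bs_mem_V1 (by omega) l
  | zero => rw [map_zero]; exact V1.zero_mem
  | add x y _ _ hx hy => rw [map_add]; exact V1.add_mem hx hy
  | smul c x _ hx => rw [map_smul]; exact V1.smul_mem c hx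

lemma Jmap_Imap {x : HZ} (hx : x ∈ Vne) : Jmap (Imap x) = x := by
  induction hx using Submodule.span_induction with
  | mem x h => obtain ⟨a, l, rfl⟩ := h; rw [Imap_bs, Jmap_bs]; ring_nf
  | zero => simp
  | add x y _ _ hx hy => simp [hx, hy]
  | smul c x _ hx => simp [hx]

section Rules

variable {m : HZ →ₗ[ℚ] HZ →ₗ[ℚ] HZ}

lemma hr1 (hm : IsExtShuffle m) : ∀ x, m (bs []) x = x := hm.1
lemma hr2 (hm : IsExtShuffle m) : ∀ x, m x (bs []) = x := hm.2.1
lemma hr3 (hm : IsExtShuffle m) : ∀ (s' : List ℤ) (t₁ : ℤ) (t' : List ℤ),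
    m (bs (0 :: s')) (bs (t₁ :: t')) = preZ (m (bs s') (bs (t₁ :: t'))) := hm.2.2.1
lemma hr4 (hm : IsExtShuffle m) : ∀ (s₁ : ℤ), 0 < s₁ → ∀ (s' t' : List ℤ),
    m (bs (s₁ :: s')) (bs (0 :: t')) = preZ (m (bs (s₁ :: s')) (bs t')) := hm.2.2.2.1
lemma hr5 (hm : IsExtShuffle m) : ∀ (s₁ t₁ : ℤ), 0 < s₁ → 0 < t₁ → ∀ (s' t' : List ℤ),
    m (bs (s₁ :: s')) (bs (t₁ :: t')) =
      Imap (m (bs (s₁ :: s')) (bs ((t₁ - 1) :: t'))) +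
      Imap (m (bs ((s₁ - 1) :: s')) (bs (t₁ :: t'))) := hm.2.2.2.2.1
lemma hr6 (hm : IsExtShuffle m) : ∀ (s₁ t₁ : ℤ), 0 < s₁ → t₁ < 0 → ∀ (s' t' : List ℤ),
    m (bs (s₁ :: s')) (bs (t₁ :: t')) =
      Jmap (m (bs (s₁ :: s')) (bs ((t₁ + 1) :: t'))) -
      m (bs ((s₁ - 1) :: s')) (bs ((t₁ + 1) :: t')) := hm.2.2.2.2.2.1
lemma hr7 (hm : IsExtShuffle m) : ∀ (s₁ : ℤ), s₁ < 0 → ∀ (t₁ : ℤ) (s' t' : List ℤ),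
    m (bs (s₁ :: s')) (bs (t₁ :: t')) =
      Jmap (m (bs ((s₁ + 1) :: s')) (bs (t₁ :: t'))) -
      m (bs ((s₁ + 1) :: s')) (bs ((t₁ - 1) :: t')) := hm.2.2.2.2.2.2

/-- products with nonempty first factor are supported on nonempty lists -/
lemma mul_ne (hm : IsExtShuffle m) :
    ∀ (n : ℕ) (a : ℤ), a.natAbs = n → ∀ (u' l₂ : List ℤ), m (bs (a :: u')) (bs l₂) ∈ Vne := by
  intro n
  induction n using Nat.strong_induction_on with
  | _ n IH =>
    intro a hn u' l₂
    cases l₂ with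
    | nil => rw [hr2 hm]; exact bs_mem_Vne a u'
    | cons b t' =>
      rcases lt_trichotomy a 0 with ha | ha | ha
      · rw [hr7 hm a ha b u' t']
        exact Vne.sub_mem (Jmap_mem_Vne _) (IH (a + 1).natAbs (by omega) _ rfl _ _)
      · subst ha; rw [hr3 hm]; exact preZ_mem_Vne _
      · rcases lt_trichotomy b 0 with hb | hb | hb
        · rw [hr6 hm a b ha hb u' t']
          exact Vne.sub_mem (Jmap_mem_Vne _) (IH (a - 1).natAbs (by omega) _ rfl _ _)
        · subst hb; rw [hr4 hm a ha]; exact preZ_mem_Vne _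
        · rw [hr5 hm a b ha hb u' t']
          exact Vne.add_mem (Imap_mem_Vne _) (Imap_mem_Vne _)

lemma mul_ne' (hm : IsExtShuffle m) (a : ℤ) (u' l₂ : List ℤ) :
    m (bs (a :: u')) (bs l₂) ∈ Vne := mul_ne hm a.natAbs a rfl u' l₂

/-- products of symbols with nonnegative heads have nonnegative heads -/
lemma mul_V0 (hm : IsExtShuffle m) :
    ∀ (n : ℕ) (a b : ℤ), 0 ≤ a → 0 ≤ b → (a + b).toNat = n →
      ∀ (u' v' : List ℤ), m (bs (a :: u')) (bs (b :: v')) ∈ V0 := by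
  intro n
  induction n using Nat.strong_induction_on with
  | _ n IH =>
    intro a b ha hb hn u' v'
    rcases ha.lt_or_eq with ha' | ha'
    · rcases hb.lt_or_eq with hb' | hb'
      · rw [hr5 hm a b ha' hb' u' v']
        refine V0.add_mem (V1_le_V0 (Imap_mem_V1 ?_)) (V1_le_V0 (Imap_mem_V1 ?_))
        · exact IH (a + (b - 1)).toNat (by omega) a (b - 1) (by omega) (by omega) rfl u' v'
        · exact IH ((a - 1) + b).toNat (by omega) (a - 1) b (by omega) (by omega) rfl u' v'
      · rw [← hb', hr4 hm a ha']; exact preZ_mem_V0 _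
    · rw [← ha', hr3 hm]; exact preZ_mem_V0 _

lemma mul_V0' (hm : IsExtShuffle m) {a b : ℤ} (ha : 0 ≤ a) (hb : 0 ≤ b) (u' v' : List ℤ) :
    m (bs (a :: u')) (bs (b :: v')) ∈ V0 := mul_V0 hm _ a b ha hb rfl u' v'

lemma mul_V1 (hm : IsExtShuffle m) {a b : ℤ} (ha : 0 < a) (hb : 0 < b) (u' v' : List ℤ) :
    m (bs (a :: u')) (bs (b :: v')) ∈ V1 := by
  rw [hr5 hm a b ha hb u' v']
  exact V1.add_mem (Imap_mem_V1 (mul_V0' hm (by omega) (by omega) _ _))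
    (Imap_mem_V1 (mul_V0' hm (by omega) (by omega) _ _))

end Rules

section Derivation

variable {m : HZ →ₗ[ℚ] HZ →ₗ[ℚ] HZ}

/-- J is a derivation on products of basis symbols -/
lemma T1basis (hm : IsExtShuffle m) (a b : ℤ) (u' v' : List ℤ) :
    Jmap (m (bs (a :: u')) (bs (b :: v'))) =
      m (bs ((a - 1) :: u')) (bs (b :: v')) + m (bs (a :: u')) (bs ((b - 1) :: v')) := by
  rcases lt_trichotomy a 0 with ha | ha | ha
  ·
    have h := hr7 hm (a - 1) (by omega) b u' v'
    rw [show a - 1 + 1 = a by ring] at h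
    rw [h]; abel
  · have h := hr7 hm (a - 1) (by omega) b u' v'
    rw [show a - 1 + 1 = a by ring] at h
    rw [h]; abel
  · rcases le_or_gt b 0 with hb | hb
    · have h := hr6 hm a (b - 1) ha (by omega) u' v'
      rw [show b - 1 + 1 = b by ring] at h
      rw [h]; abel
    · rw [hr5 hm a b ha hb u' v', map_add,
        Jmap_Imap (mul_ne' hm a u' ((b - 1) :: v')),
        Jmap_Imap (mul_ne' hm (a - 1) u' (b :: v'))]
      abel

/-- J-derivation, linearized in both arguments -/
lemma T1M (hm : IsExtShuffle m) {x y : HZ} (hx : x ∈ Vne) (hy : y ∈ Vne) :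
    Jmap (m x y) = m (Jmap x) y + m x (Jmap y) := by
  induction hx using Submodule.span_induction with
  | mem x h =>
    obtain ⟨a, l, rfl⟩ := h
    induction hy using Submodule.span_induction with
    | mem y h' =>
      obtain ⟨b, l', rfl⟩ := h'
      rw [Jmap_bs, Jmap_bs]
      exact T1basis hm a b l l'
    | zero => simp
    | add y z _ _ hy hz => simp only [map_add]; rw [hy, hz]; abel
    | smul c y _ hy => simp only [map_smul, LinearMap.map_smul]; rw [hy]; simp [smul_add]
  | zero => simp
  | add x z hxm hzm hx hz =>
    simp only [map_add, LinearMap.add_apply]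
    rw [hx, hz]; abel
  | smul c x hxm hx =>
    simp only [map_smul, LinearMap.smul_apply, LinearMap.map_smul]
    rw [hx]; simp [smul_add]

/-- rearrangement: J in the first slot -/
lemma T1L (hm : IsExtShuffle m) {x : HZ} (hx : x ∈ Vne) (b : ℤ) (l : List ℤ) :
    m (Jmap x) (bs (b :: l)) =
      Jmap (m x (bs (b :: l))) - m x (bs ((b - 1) :: l)) := by
  have h := T1M hm hx (bs_mem_Vne b l)
  rw [Jmap_bs] at h
  rw [eq_sub_iff_add_eq, ← h]

/-- rearrangement: J in the second slot (first argument a span element) -/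
lemma T1Rv (hm : IsExtShuffle m) {x : HZ} (hx : x ∈ Vne) (b : ℤ) (l : List ℤ) :
    m x (bs ((b - 1) :: l)) =
      Jmap (m x (bs (b :: l))) - m (Jmap x) (bs (b :: l)) := by
  have h := T1M hm hx (bs_mem_Vne b l)
  rw [Jmap_bs] at h
  rw [eq_sub_iff_add_eq, add_comm, ← h]

/-- rearrangement: J applied to a general Vne element in the second slot -/
lemma T1R (hm : IsExtShuffle m) (a : ℤ) (u' : List ℤ) {y : HZ} (hy : y ∈ Vne) :
    m (bs (a :: u')) (Jmap y) =
      Jmap (m (bs (a :: u')) y) - m (bs ((a - 1) :: u')) y := by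
  have h := T1M hm (bs_mem_Vne a u') hy
  rw [Jmap_bs] at h
  rw [eq_sub_iff_add_eq, add_comm, ← h]

end Derivation

section MoreLemmas

variable {m : HZ →ₗ[ℚ] HZ →ₗ[ℚ] HZ}

lemma single_smul_bs (l : List ℤ) (c : ℚ) : (Finsupp.single l c : HZ) = c • bs l := by
  simp [bs, Finsupp.smul_single]

/-- preZ in the first argument commutes with the product -/
lemma P1 (hm : IsExtShuffle m) (x y : HZ) : m (preZ x) y = preZ (m x y) := by
  induction x using Finsupp.induction_linear with
  | zero => simp
  | add f g hf hg => simp only [map_add, LinearMap.add_apply]; rw [hf, hg]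
  | single l c =>
    rw [single_smul_bs]
    simp only [map_smul, LinearMap.smul_apply]
    congr 1
    -- now: m (preZ (bs l)) y = preZ (m (bs l) y)
    rw [preZ_bs]
    induction y using Finsupp.induction_linear with
    | zero => simp
    | add f g hf hg => simp only [map_add]; rw [hf, hg]
    | single l' c' =>
      rw [single_smul_bs]
      simp only [map_smul]
      congr 1
      cases l' with
      | nil => rw [hr2 hm, hr2 hm, preZ_bs]
      | cons b t' => exact hr3 hm l b t'

/-- preZ in the second argument, first argument a basis symbol with positive head -/
lemma P2u (hm : IsExtShuffle m) {a : ℤ} (ha : 0 < a) (u' : List ℤ) (y : HZ) :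
    m (bs (a :: u')) (preZ y) = preZ (m (bs (a :: u')) y) := by
  induction y using Finsupp.induction_linear with
  | zero => simp
  | add f g hf hg => simp only [map_add]; rw [hf, hg]
  | single l c =>
    rw [single_smul_bs]
    simp only [map_smul]
    congr 1
    rw [preZ_bs]
    exact hr4 hm a ha u' l

/-- preZ in the second argument, first argument in V1 -/
lemma P2V (hm : IsExtShuffle m) {x : HZ} (hx : x ∈ V1) (w : List ℤ) :
    m x (bs (0 :: w)) = preZ (m x (bs w)) := by
  induction hx using Submodule.span_induction with
  | mem x h => obtain ⟨a, l, rfl, ha⟩ := h; exact hr4 hm a ha l w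
  | zero => simp
  | add x y _ _ hx hy => simp only [LinearMap.add_apply, map_add]; rw [hx, hy]
  | smul c x _ hx => simp only [LinearMap.smul_apply, map_smul]; rw [hx]

/-- rule 5 linearized: first argument I of a V0 element -/
lemma L5L (hm : IsExtShuffle m) {x : HZ} (hx : x ∈ V0) {c : ℤ} (hc : 0 < c) (w' : List ℤ) :
    m (Imap x) (bs (c :: w')) =
      Imap (m (Imap x) (bs ((c - 1) :: w'))) + Imap (m x (bs (c :: w'))) := by
  induction hx using Submodule.span_induction with
  | mem x h =>
    obtain ⟨a, l, rfl, ha⟩ := h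
    rw [Imap_bs]
    have h5 := hr5 hm (a + 1) c (by omega) hc l w'
    rw [show a + 1 - 1 = a by ring] at h5
    exact h5
  | zero => simp
  | add x y _ _ hx hy =>
    simp only [map_add, LinearMap.add_apply]
    rw [hx, hy]; abel
  | smul r x _ hx =>
    simp only [map_smul, LinearMap.smul_apply]
    rw [hx]; simp [smul_add]

/-- rule 5 linearized: second argument I of a V0 element -/
lemma L5R (hm : IsExtShuffle m) {a : ℤ} (ha : 0 < a) (u' : List ℤ) {y : HZ} (hy : y ∈ V0) :
    m (bs (a :: u')) (Imap y) =
      Imap (m (bs (a :: u')) y) + Imap (m (bs ((a - 1) :: u')) (Imap y)) := by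
  induction hy using Submodule.span_induction with
  | mem y h =>
    obtain ⟨b, l, rfl, hb⟩ := h
    rw [Imap_bs]
    have h5 := hr5 hm a (b + 1) ha (by omega) u' l
    rw [show b + 1 - 1 = b by ring] at h5
    exact h5
  | zero => simp
  | add x y _ _ hx hy =>
    simp only [map_add]
    rw [hx, hy]; abel
  | smul r x _ hx =>
    simp only [map_smul]
    rw [hx]; simp [smul_add]

/-- rule 7 linearized in the second argument -/
lemma R7lin (hm : IsExtShuffle m) {a : ℤ} (ha : a < 0) (u' : List ℤ) (y : HZ) :
    m (bs (a :: u')) y =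
      Jmap (m (bs ((a + 1) :: u')) y) - m (bs ((a + 1) :: u')) (Jmap y) := by
  induction y using Finsupp.induction_linear with
  | zero => simp
  | add f g hf hg =>
    simp only [map_add]
    rw [hf, hg]; abel
  | single l c =>
    rw [single_smul_bs]
    simp only [map_smul]
    rw [← smul_sub]
    congr 1
    cases l with
    | nil => rw [hr2 hm, Jmap_nil, map_zero, hr2 hm, Jmap_bs]; simp
    | cons b t' => rw [hr7 hm a ha b u' t', Jmap_bs]

end MoreLemmas

/-- Full associativity of the extended shuffle product on basis symbols. -/
theorem assocA {m : HZ →ₗ[ℚ] HZ →ₗ[ℚ] HZ} (hm : IsExtShuffle m) (l₁ l₂ l₃ : List ℤ) :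
    m (m (bs l₁) (bs l₂)) (bs l₃) = m (bs l₁) (m (bs l₂) (bs l₃)) := by
  cases l₁ with
  | nil => rw [hr1 hm, hr1 hm]
  | cons a u' =>
  cases l₂ with
  | nil => rw [hr2 hm, hr1 hm]
  | cons b v' =>
  cases l₃ with
  | nil => rw [hr2 hm, hr2 hm]
  | cons c w' =>
  rcases lt_trichotomy a 0 with ha | ha | ha
  · -- a < 0
    have hXne : m (bs ((a + 1) :: u')) (bs (b :: v')) ∈ Vne := mul_ne' hm _ _ _
    rw [hr7 hm a ha b u' v', map_sub, LinearMap.sub_apply, T1L hm hXne c w',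
      assocA hm ((a + 1) :: u') (b :: v') (c :: w'),
      assocA hm ((a + 1) :: u') (b :: v') ((c - 1) :: w'),
      assocA hm ((a + 1) :: u') ((b - 1) :: v') (c :: w'),
      R7lin hm ha u' (m (bs (b :: v')) (bs (c :: w'))),
      T1basis hm b c v' w', map_add]
    abel
  · -- a = 0
    subst ha
    rw [hr3 hm u' b v', P1 hm,
      assocA hm u' (b :: v') (c :: w'), ← preZ_bs, P1 hm]
  · -- a > 0
    rcases lt_trichotomy b 0 with hb | hb | hb
    · -- b < 0
      have hY : m (bs (a :: u')) (bs ((b + 1) :: v')) ∈ Vne := mul_ne' hm _ _ _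
      have hW : m (bs ((b + 1) :: v')) (bs (c :: w')) ∈ Vne := mul_ne' hm _ _ _
      rw [hr6 hm a b ha hb u' v', map_sub, LinearMap.sub_apply, T1L hm hY c w',
        assocA hm (a :: u') ((b + 1) :: v') (c :: w'),
        assocA hm (a :: u') ((b + 1) :: v') ((c - 1) :: w'),
        assocA hm ((a - 1) :: u') ((b + 1) :: v') (c :: w'),
        hr7 hm b hb c v' w', map_sub, T1R hm a u' hW]
      abel
    · -- b = 0
      subst hb
      rw [hr4 hm a ha u' v', P1 hm,
        assocA hm (a :: u') v' (c :: w'),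
        hr3 hm v' c w', P2u hm ha u']
    · -- b > 0
      rcases lt_trichotomy c 0 with hc | hc | hc
      · -- c < 0
        have hX : m (bs (a :: u')) (bs (b :: v')) ∈ Vne := mul_ne' hm _ _ _
        have hW : m (bs (b :: v')) (bs ((c + 1) :: w')) ∈ Vne := mul_ne' hm _ _ _
        have h1 := T1Rv hm hX (c + 1) w'
        rw [show c + 1 - 1 = c by ring] at h1
        rw [h1, T1basis hm a b u' v', map_add, LinearMap.add_apply,
          assocA hm (a :: u') (b :: v') ((c + 1) :: w'),
          assocA hm ((a - 1) :: u') (b :: v') ((c + 1) :: w'),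
          assocA hm (a :: u') ((b - 1) :: v') ((c + 1) :: w'),
          hr6 hm b c hb hc v' w', map_sub, T1R hm a u' hW]
        abel
      · -- c = 0
        subst hc
        rw [P2V hm (mul_V1 hm ha hb u' v') w',
          assocA hm (a :: u') (b :: v') w',
          hr4 hm b hb v' w', P2u hm ha u']
      · -- c > 0
        have hA : m (bs (a :: u')) (bs ((b - 1) :: v')) ∈ V0 :=
          mul_V0' hm (by omega) (by omega) _ _
        have hB : m (bs ((a - 1) :: u')) (bs (b :: v')) ∈ V0 :=
          mul_V0' hm (by omega) (by omega) _ _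
        have hC : m (bs (b :: v')) (bs ((c - 1) :: w')) ∈ V0 :=
          mul_V0' hm (by omega) (by omega) _ _
        have hD : m (bs ((b - 1) :: v')) (bs (c :: w')) ∈ V0 :=
          mul_V0' hm (by omega) (by omega) _ _
        rw [hr5 hm a b ha hb u' v',
          ← map_add Imap ((m (bs (a :: u'))) (bs ((b - 1) :: v')))
            ((m (bs ((a - 1) :: u'))) (bs (b :: v'))),
          L5L hm (V0.add_mem hA hB) hc w',
          map_add Imap ((m (bs (a :: u'))) (bs ((b - 1) :: v')))
            ((m (bs ((a - 1) :: u'))) (bs (b :: v'))),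
          ← hr5 hm a b ha hb u' v',
          assocA hm (a :: u') (b :: v') ((c - 1) :: w'),
          hr5 hm b c hb hc v' w',
          ← map_add Imap ((m (bs (b :: v'))) (bs ((c - 1) :: w')))
            ((m (bs ((b - 1) :: v'))) (bs (c :: w'))),
          L5R hm ha u' (V0.add_mem hC hD),
          map_add Imap ((m (bs (b :: v'))) (bs ((c - 1) :: w')))
            ((m (bs ((b - 1) :: v'))) (bs (c :: w'))),
          ← hr5 hm b c hb hc v' w']
        simp only [map_add, LinearMap.add_apply]
        rw [assocA hm (a :: u') ((b - 1) :: v') (c :: w'),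
          assocA hm ((a - 1) :: u') (b :: v') (c :: w')]
        abel
termination_by (l₁.length + l₂.length + l₃.length, l₁.headI.natAbs, l₂.headI.natAbs, l₃.headI.natAbs)
decreasing_by
  all_goals simp only [List.headI, List.length_cons]
  all_goals
    first
    | (apply Prod.Lex.left; omega)
    | (apply Prod.Lex.right
       first
       | (apply Prod.Lex.left; omega)
       | (apply Prod.Lex.right
          first
          | (apply Prod.Lex.left; omega)
          | (apply Prod.Lex.right; omega)
          | omega)
       | omega)

/-- Associativity of the extended shuffle product on depth-one symbols. -/
theorem extended_shuffle_assoc_depth_one (m : HZ →ₗ[ℚ] HZ →ₗ[ℚ] HZ) (hm : IsExtShuffle m) :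
    ∀ s t r : ℤ, m (m (bs [s]) (bs [t])) (bs [r]) = m (bs [s]) (m (bs [t]) (bs [r])) := by
  intro s t r
  exact assocA hm [s] [t] [r]
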